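/- arXiv:2201.08596 — 4 statements merged into one kernel-verified Lean document; each statement's English description precedes it below -/
import Mathlib

section
/- Every Boolean network whose interaction graph is a signed cycle of positive sign has exactly two fixed points. -/
open scoped Classical

/-- A signed digraph on vertex set `V`: for each ordered pair of vertices there may be
a positive arc and/or a negative arc. -/
structure SDigraph (V : Type) where
  pos : V → V → Bool
  neg : V → V → Bool

namespace SDigraph

variable {V : Type}

/-- There is an arc (of some sign) from `a` to `b` (the underlying unsigned digraph). -/
def arc (G : SDigraph V) (a b : V) : Prop := G.pos a b = true ∨ G.neg a b = true

/-- Out-degree: positive and negative arcs are counted separately. -/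
def outdeg [Fintype V] (G : SDigraph V) (i : V) : ℕ :=
  (Finset.univ.filter fun j => G.pos i j = true).card +
  (Finset.univ.filter fun j => G.neg i j = true).card

/-- In-degree: positive and negative arcs are counted separately. -/
def indeg [Fintype V] (G : SDigraph V) (i : V) : ℕ :=
  (Finset.univ.filter fun j => G.pos j i = true).card +
  (Finset.univ.filter fun j => G.neg j i = true).card

/-- The symmetrized adjacency relation (for weak connectivity). -/
def wconnRel (G : SDigraph V) (a b : V) : Prop := G.arc a b ∨ G.arc b a

/-- `G` is (weakly) connected. -/
def Connected (G : SDigraph V) : Prop :=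
  ∀ a b : V, Relation.ReflTransGen (wconnRel G) a b

/-- Directed reachability. -/
def Reach (G : SDigraph V) : V → V → Prop := Relation.ReflTransGen G.arc

/-- Out-degree in the underlying unsigned digraph. -/
noncomputable def underOutdeg [Fintype V] (G : SDigraph V) (i : V) : ℕ :=
  (Finset.univ.filter fun j => G.arc i j).card

/-- In-degree in the underlying unsigned digraph. -/
noncomputable def underIndeg [Fintype V] (G : SDigraph V) (i : V) : ℕ :=
  (Finset.univ.filter fun j => G.arc j i).card

/-- `G` is a signed cycle: the underlying digraph is a directed cycle
(every vertex has exactly one out- and one in-neighbour and the graph is connected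
and nonempty) and there are no parallel arcs. -/
def IsSignedCycleGraph [Fintype V] (G : SDigraph V) : Prop :=
  0 < Fintype.card V ∧ Connected G ∧
  (∀ a b : V, ¬(G.pos a b = true ∧ G.neg a b = true)) ∧
  (∀ i : V, underOutdeg G i = 1) ∧
  (∀ i : V, underIndeg G i = 1)

/-- `steps G m a b`: there is a directed walk of length `m` from `a` to `b`. -/
def steps (G : SDigraph V) : ℕ → V → V → Prop
  | 0 => fun a b => a = b
  | m + 1 => fun a b => ∃ c, G.arc a c ∧ steps G m c b

/-- Directed distance from `a` to `b`, `⊤` if `b` is not reachable from `a`. -/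
noncomputable def dist (G : SDigraph V) (a b : V) : ℕ∞ :=
  sInf {x : ℕ∞ | ∃ m : ℕ, steps G m a b ∧ x = (m : ℕ∞)}

/-- The strong component containing `a`, as a finite set of vertices. -/
noncomputable def scc [Fintype V] (G : SDigraph V) (a : V) : Finset V :=
  Finset.univ.filter fun b => Reach G a b ∧ Reach G b a

/-- The strong component of `a` is initial: no arc enters it from outside. -/
def Initial [Fintype V] (G : SDigraph V) (a : V) : Prop :=
  ∀ b c : V, b ∈ scc G a → G.arc c b → c ∈ scc G a

/-- `λ(G) = max_i min_{initial strong component I} (d_G(I,i) + |I|)`. -/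
noncomputable def lam [Fintype V] (G : SDigraph V) : ℕ∞ :=
  Finset.univ.sup fun i : V =>
    (Finset.univ.filter fun a : V => Initial G a).inf fun a =>
      (scc G a).inf (fun b => dist G b i) + ((scc G a).card : ℕ∞)

/-- `G` is basic: all its initial strong components are trivial
(a single vertex with no loop). -/
def Basic [Fintype V] (G : SDigraph V) : Prop :=
  ∀ a : V, Initial G a → (scc G a).card = 1 ∧ ¬ G.arc a a

/-- The (weakly) connected component containing `a`. -/
noncomputable def component [Fintype V] (G : SDigraph V) (a : V) : Finset V :=
  Finset.univ.filter fun b => Relation.ReflTransGen (wconnRel G) a b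

/-- The subgraph induced by a set `S` of vertices. -/
def induce (G : SDigraph V) (S : Finset V) : SDigraph {x : V // x ∈ S} :=
  ⟨fun a b => G.pos a.1 b.1, fun a b => G.neg a.1 b.1⟩

/-- `v` (with arc signs `s`) is a directed cycle of `G` on `m+1` distinct vertices:
for each `t` there is an arc of sign `s t` from `v t` to `v (t+1)` (cyclically). -/
def IsSignedCycleOn (G : SDigraph V) (m : ℕ)
    (v : Fin (m + 1) → V) (s : Fin (m + 1) → Bool) : Prop :=
  Function.Injective v ∧
  ∀ t : Fin (m + 1),
    if s t then G.pos (v t) (v (t + 1)) = true else G.neg (v t) (v (t + 1)) = true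

/-- `G` has a directed cycle (signs ignored). -/
def HasCycle (G : SDigraph V) : Prop :=
  ∃ (m : ℕ) (v : Fin (m + 1) → V), Function.Injective v ∧
    ∀ t : Fin (m + 1), G.arc (v t) (v (t + 1))

/-- Number of negative arcs in a sign pattern. -/
def negCount {m : ℕ} (s : Fin (m + 1) → Bool) : ℕ :=
  (Finset.univ.filter fun t => s t = false).card

/-- `G` has a positive cycle. -/
def HasPositiveCycle (G : SDigraph V) : Prop :=
  ∃ (m : ℕ) (v : Fin (m + 1) → V) (s : Fin (m + 1) → Bool),
    IsSignedCycleOn G m v s ∧ negCount s % 2 = 0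

/-- `G` has a negative cycle. -/
def HasNegativeCycle (G : SDigraph V) : Prop :=
  ∃ (m : ℕ) (v : Fin (m + 1) → V) (s : Fin (m + 1) → Bool),
    IsSignedCycleOn G m v s ∧ negCount s % 2 = 1

end SDigraph

/-- A finite dynamical system with components indexed by `V`: each `X i` is a
nonempty finite interval of integers and `f` maps `X = ∏ X i` into itself. -/
structure FDS (V : Type) where
  X : V → Finset ℤ
  nonempty : ∀ i, (X i).Nonempty
  interval : ∀ i, ∀ a ∈ X i, ∀ b ∈ X i, ∀ c : ℤ, a ≤ c → c ≤ b → c ∈ X i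
  f : (V → ℤ) → V → ℤ
  maps : ∀ x, (∀ i, x i ∈ X i) → ∀ i, f x i ∈ X i

namespace FDS

variable {V : Type}

/-- `x` is a state of the system, i.e. `x ∈ X`. -/
def mem (F : FDS V) (x : V → ℤ) : Prop := ∀ i, x i ∈ F.X i

/-- `G` is the interaction graph of `F`: there is a positive (negative) arc from
`j` to `i` iff increasing `x j` by one can strictly increase (decrease) `f _ i`. -/
def onGraph [DecidableEq V] (F : FDS V) (G : SDigraph V) : Prop :=
  (∀ j i, G.pos j i = true ↔ ∃ x, F.mem x ∧ x j + 1 ∈ F.X j ∧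
      F.f x i < F.f (Function.update x j (x j + 1)) i) ∧
  (∀ j i, G.neg j i = true ↔ ∃ x, F.mem x ∧ x j + 1 ∈ F.X j ∧
      F.f (Function.update x j (x j + 1)) i < F.f x i)

/-- `F` is degree-bounded with respect to `G`. -/
def degreeBounded [Fintype V] (F : FDS V) (G : SDigraph V) : Prop :=
  ∀ i, (G.outdeg i = 0 ∧ 0 < G.indeg i → (F.X i).card = 2) ∧
    (¬(G.outdeg i = 0 ∧ 0 < G.indeg i) → (F.X i).card ≤ G.outdeg i + 1)

/-- Fixed points of `F`. -/
def IsFixed (F : FDS V) (x : V → ℤ) : Prop := F.mem x ∧ F.f x = x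

/-- `F` is nilpotent: some iterate is constant on `X`. -/
def Nilpotent (F : FDS V) : Prop :=
  ∃ k : ℕ, 1 ≤ k ∧ ∃ c, ∀ x, F.mem x → F.f^[k] x = c

/-- `F` converges toward `H` in `k` steps:
`f^k(X) ⊆ h(Y) ⊆ Y ⊆ X` and `f = h` on `Y`. -/
def ConvergesToward (F H : FDS V) (k : ℕ) : Prop :=
  (∀ i, H.X i ⊆ F.X i) ∧
  (∀ x, F.mem x → ∃ y, H.mem y ∧ F.f^[k] x = H.f y) ∧
  (∀ x, H.mem x → F.f x = H.f x)

end FDS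

private lemma diff_arc {n : ℕ} (F : FDS (Fin n)) (G : SDigraph (Fin n))
    (hG : F.onGraph G) (hBool : ∀ i, F.X i = ({0, 1} : Finset ℤ)) :
    ∀ (N : ℕ) (x y : Fin n → ℤ), F.mem x → F.mem y →
      (Finset.univ.filter fun j => x j ≠ y j).card ≤ N →
      ∀ i, F.f x i ≠ F.f y i → ∃ j, x j ≠ y j ∧ G.arc j i := by
  intro N
  induction N with
  | zero =>
    intro x y hx hy hcard i hne
    exfalso
    apply hne
    have hxy : x = y := by
      funext j
      by_contra h
      have hj : j ∈ Finset.univ.filter fun j => x j ≠ y j := by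
        simp [h]
      have := Finset.card_pos.mpr ⟨j, hj⟩
      omega
    rw [hxy]
  | succ N ih =>
    intro x y hx hy hcard i hne
    have hxy : x ≠ y := fun h => hne (by rw [h])
    have : ∃ j, x j ≠ y j := by
      by_contra h
      push_neg at h
      exact hxy (funext h)
    obtain ⟨j, hj⟩ := this
    set y' : Fin n → ℤ := Function.update y j (x j) with hy'def
    have hy' : F.mem y' := by
      intro l
      by_cases hl : l = j
      · subst hl; simpa [hy'def] using hx l
      · simpa [hy'def, Function.update_of_ne hl] using hy l
    by_cases hfy : F.f y' i = F.f y i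
    · have hne' : F.f x i ≠ F.f y' i := by rw [hfy]; exact hne
      have hsub : (Finset.univ.filter fun l => x l ≠ y' l) ⊆
          (Finset.univ.filter fun l => x l ≠ y l) \ {j} := by
        intro l hl
        simp only [Finset.mem_filter, Finset.mem_univ, true_and] at hl
        have hlj : l ≠ j := by
          intro h; subst h
          exact hl (by simp [hy'def])
        simp only [Finset.mem_sdiff, Finset.mem_filter, Finset.mem_univ, true_and,
          Finset.mem_singleton]
        refine ⟨?_, hlj⟩
        rwa [hy'def, Function.update_of_ne hlj] at hl
      have hjmem : j ∈ Finset.univ.filter fun l => x l ≠ y l := by simp [hj]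
      have hcard' : (Finset.univ.filter fun l => x l ≠ y' l).card ≤ N := by
        have h1 := Finset.card_le_card hsub
        have h2 : ((Finset.univ.filter fun l => x l ≠ y l) \ {j}).card
            = (Finset.univ.filter fun l => x l ≠ y l).card - 1 := by
          rw [Finset.sdiff_singleton_eq_erase, Finset.card_erase_of_mem hjmem]
        have h3 := Finset.card_pos.mpr ⟨j, hjmem⟩
        omega
      obtain ⟨l, hl1, hl2⟩ := ih x y' hx hy' hcard' i hne'
      have hlj : l ≠ j := by
        intro h; subst h
        exact hl1 (by simp [hy'def])
      refine ⟨l, ?_, hl2⟩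
      rwa [hy'def, Function.update_of_ne hlj] at hl1
    · -- arc from j to i
      have hxj01 : x j = 0 ∨ x j = 1 := by
        have := hx j; rw [hBool j] at this; simpa using this
      have hyj01 : y j = 0 ∨ y j = 1 := by
        have := hy j; rw [hBool j] at this; simpa using this
      have harc : G.arc j i := by
        rcases hxj01 with hx0 | hx1
        · -- x j = 0, so y j = 1, y = update y' j (y' j + 1)
          have hy1 : y j = 1 := by
            rcases hyj01 with h | h
            · exact absurd (hx0.trans h.symm) hj
            · exact h
          have hyu : Function.update y' j (y' j + 1) = y := by
            funext l
            by_cases hl : l = j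
            · subst hl; simp [hy'def, hx0, hy1]
            · simp [hy'def, Function.update_of_ne hl]
          have hmemj : y' j + 1 ∈ F.X j := by
            rw [hBool j]; simp [hy'def, hx0]
          rcases lt_trichotomy (F.f y' i) (F.f y i) with h | h | h
          · left
            refine (hG.1 j i).2 ⟨y', hy', hmemj, ?_⟩
            rwa [hyu]
          · exact absurd h hfy
          · right
            refine (hG.2 j i).2 ⟨y', hy', hmemj, ?_⟩
            rwa [hyu]
        · -- x j = 1, y j = 0, y' = update y j (y j + 1)
          have hy0 : y j = 0 := by
            rcases hyj01 with h | h
            · exact h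
            · exact absurd (hx1.trans h.symm) hj
          have hyu : Function.update y j (y j + 1) = y' := by
            funext l
            by_cases hl : l = j
            · subst hl; simp [hy'def, hx1, hy0]
            · simp [hy'def, Function.update_of_ne hl]
          have hmemj : y j + 1 ∈ F.X j := by
            rw [hBool j]; simp [hy0]
          rcases lt_trichotomy (F.f y i) (F.f y' i) with h | h | h
          · left
            refine (hG.1 j i).2 ⟨y, hy, hmemj, ?_⟩
            rwa [hyu]
          · exact absurd h.symm hfy
          · right
            refine (hG.2 j i).2 ⟨y, hy, hmemj, ?_⟩
            rwa [hyu]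
      exact ⟨j, hj, harc⟩
private noncomputable def toInt (z : ZMod 2) : ℤ := if z = 1 then 1 else 0

private lemma toInt01 (z : ZMod 2) : toInt z = 0 ∨ toInt z = 1 := by
  unfold toInt; split <;> simp

private lemma toInt_cast (z : ZMod 2) : ((toInt z : ℤ) : ZMod 2) = z := by
  revert z; decide

private lemma toInt_zero : toInt 0 = 0 := by decide
private lemma toInt_one : toInt 1 = 1 := by decide

private lemma toInt_flip (c : Bool) (z : ZMod 2) :
    (if c then 1 - toInt z else toInt z) = toInt ((if c then 1 else 0) + z) := by
  cases c <;> revert z <;> decide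

private lemma int01_eq (a b : ℤ) (ha : a = 0 ∨ a = 1) (hb : b = 0 ∨ b = 1)
    (h : ((a : ZMod 2) = (b : ZMod 2))) : a = b := by
  rcases ha with ha | ha <;> rcases hb with hb | hb <;> subst ha <;> subst hb <;>
    first | rfl | (exfalso; revert h; decide)
/-- A Boolean network whose interaction graph is a positive signed cycle
has exactly two fixed points. -/
theorem stmt8 (n : ℕ) (F : FDS (Fin n)) (hBool : ∀ i, F.X i = ({0, 1} : Finset ℤ))
    (G : SDigraph (Fin n)) (hG : F.onGraph G) (hc : SDigraph.IsSignedCycleGraph G)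
    (hpos : (Finset.univ.filter fun p : Fin n × Fin n => G.neg p.1 p.2 = true).card % 2 = 0) :
    ∃ x y : Fin n → ℤ, x ≠ y ∧ F.IsFixed x ∧ F.IsFixed y ∧
      ∀ z, F.IsFixed z → z = x ∨ z = y := by
  classical
  obtain ⟨hcard, hconn, hpar, hout, hin⟩ := hc
  have hn : 0 < n := by simpa using hcard
  -- the unique out-neighbour σ and in-neighbour π
  have hσex : ∀ i : Fin n, ∃ a, ∀ j, G.arc i j ↔ j = a := by
    intro i
    have h := hout i
    unfold SDigraph.underOutdeg at h
    obtain ⟨a0, ha⟩ := Finset.card_eq_one.mp h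
    refine ⟨a0, fun j => ⟨fun hj => ?_, fun hj => ?_⟩⟩
    · have : j ∈ Finset.univ.filter fun j => G.arc i j := by simp [hj]
      rw [ha] at this; simpa using this
    · rw [hj]
      have : a0 ∈ Finset.univ.filter fun j => G.arc i j := by rw [ha]; simp
      simpa using this
  have hπex : ∀ i : Fin n, ∃ a, ∀ j, G.arc j i ↔ j = a := by
    intro i
    have h := hin i
    unfold SDigraph.underIndeg at h
    obtain ⟨a0, ha⟩ := Finset.card_eq_one.mp h
    refine ⟨a0, fun j => ⟨fun hj => ?_, fun hj => ?_⟩⟩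
    · have : j ∈ Finset.univ.filter fun j => G.arc j i := by simp [hj]
      rw [ha] at this; simpa using this
    · rw [hj]
      have : a0 ∈ Finset.univ.filter fun j => G.arc j i := by rw [ha]; simp
      simpa using this
  choose σ hσ using hσex
  choose π hπ using hπex
  have harcσ : ∀ i, G.arc i (σ i) := fun i => (hσ i (σ i)).mpr rfl
  have harcπ : ∀ i, G.arc (π i) i := fun i => (hπ i (π i)).mpr rfl
  have hπσ : ∀ i, π (σ i) = i := fun i => ((hπ (σ i) i).mp (harcσ i)).symm
  have hσπ : ∀ i, σ (π i) = i := fun i => ((hσ (π i) i).mp (harcπ i)).symm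
  have hσinj : Function.Injective σ := fun a b h => by
    have := hπσ a; rw [h, hπσ] at this; exact this.symm
  -- f depends only on the predecessor coordinate
  have hdep : ∀ x y, F.mem x → F.mem y → ∀ i, x (π i) = y (π i) → F.f x i = F.f y i := by
    intro x y hx hy i hxyπ
    by_contra hne
    obtain ⟨j, hj1, hj2⟩ := diff_arc F G hG hBool
      (Finset.univ.filter fun j => x j ≠ y j).card x y hx hy le_rfl i hne
    have : j = π i := (hπ i j).mp hj2
    subst this
    exact hj1 hxyπ
  have hmem01 : ∀ x, F.mem x → ∀ j, x j = 0 ∨ x j = 1 := by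
    intro x hx j
    have := hx j; rw [hBool j] at this; simpa using this
  -- the local rule: f x i = ε i ⊕ x (π i)
  have hf : ∀ x, F.mem x → ∀ i,
      F.f x i = if G.neg (π i) i = true then 1 - x (π i) else x (π i) := by
    intro x hx i
    by_cases hneg : G.neg (π i) i = true
    · simp only [hneg, if_true]
      obtain ⟨x₀, hx₀, hXj, hlt⟩ := (hG.2 (π i) i).1 hneg
      set x₁ : Fin n → ℤ := Function.update x₀ (π i) (x₀ (π i) + 1) with hx₁def
      have hx₁ : F.mem x₁ := by
        intro l
        by_cases hl : l = π i
        · subst hl; simpa [hx₁def] using hXj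
        · simpa [hx₁def, Function.update_of_ne hl] using hx₀ l
      have h00 : x₀ (π i) = 0 := by
        have h1 := hmem01 x₀ hx₀ (π i)
        have h2 : x₀ (π i) + 1 = 0 ∨ x₀ (π i) + 1 = 1 := by
          have := hXj; rw [hBool (π i)] at this; simpa using this
        omega
      have hf0 : F.f x₀ i = 1 ∧ F.f x₁ i = 0 := by
        have h1 := hmem01 _ (fun l => F.maps x₀ hx₀ l) i
        have h2 := hmem01 _ (fun l => F.maps x₁ hx₁ l) i
        simp only [FDS.mem] at *
        omega
      rcases hmem01 x hx (π i) with h | h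
      · rw [h]
        have := hdep x x₀ hx hx₀ i (by rw [h, h00])
        rw [this, hf0.1]; norm_num
      · rw [h]
        have : x (π i) = x₁ (π i) := by simp [hx₁def, h, h00]
        have := hdep x x₁ hx hx₁ i this
        rw [this, hf0.2]; ring
    · rw [if_neg hneg]
      have hposa : G.pos (π i) i = true := by
        rcases harcπ i with h | h
        · exact h
        · exact absurd h hneg
      obtain ⟨x₀, hx₀, hXj, hlt⟩ := (hG.1 (π i) i).1 hposa
      set x₁ : Fin n → ℤ := Function.update x₀ (π i) (x₀ (π i) + 1) with hx₁def
      have hx₁ : F.mem x₁ := by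
        intro l
        by_cases hl : l = π i
        · subst hl; simpa [hx₁def] using hXj
        · simpa [hx₁def, Function.update_of_ne hl] using hx₀ l
      have h00 : x₀ (π i) = 0 := by
        have h1 := hmem01 x₀ hx₀ (π i)
        have h2 : x₀ (π i) + 1 = 0 ∨ x₀ (π i) + 1 = 1 := by
          have := hXj; rw [hBool (π i)] at this; simpa using this
        omega
      have hf0 : F.f x₀ i = 0 ∧ F.f x₁ i = 1 := by
        have h1 := hmem01 _ (fun l => F.maps x₀ hx₀ l) i
        have h2 := hmem01 _ (fun l => F.maps x₁ hx₁ l) i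
        simp only [FDS.mem] at *
        omega
      rcases hmem01 x hx (π i) with h | h
      · rw [h]
        have := hdep x x₀ hx hx₀ i (by rw [h, h00])
        rw [this, hf0.1]
      · rw [h]
        have : x (π i) = x₁ (π i) := by simp [hx₁def, h, h00]
        have := hdep x x₁ hx hx₁ i this
        rw [this, hf0.2]
  -- base vertex
  set v0 : Fin n := ⟨0, hn⟩ with hv0def
  -- a positive period exists
  have hper : ∃ m, 0 < m ∧ σ^[m] v0 = v0 := by
    obtain ⟨a, b, hab, heq⟩ := Finite.exists_ne_map_eq_of_infinite (fun k : ℕ => σ^[k] v0)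
    have key : ∀ a b : ℕ, a < b → σ^[a] v0 = σ^[b] v0 → ∃ m, 0 < m ∧ σ^[m] v0 = v0 := by
      intro a b hlt heq
      refine ⟨b - a, by omega, ?_⟩
      have h1 : σ^[a] (σ^[a + (b - a) - a] v0) = σ^[a] v0 := by
        rw [show a + (b - a) - a = b - a by omega, ← Function.iterate_add_apply,
          show a + (b - a) = b by omega]
        exact heq.symm
      have := Function.Injective.iterate hσinj a h1
      rwa [show a + (b - a) - a = b - a by omega] at this
    rcases lt_or_gt_of_ne hab with h | h
    · exact key a b h heq
    · exact key b a h heq.symm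
  -- every vertex is in the forward orbit of v0
  have horb : ∀ j, ∃ k, σ^[k] v0 = j := by
    have hO : ∀ a b : Fin n, G.wconnRel a b → (∃ k, σ^[k] v0 = a) → ∃ k, σ^[k] v0 = b := by
      rintro a b hw ⟨k, hk⟩
      rcases hw with h | h
      · refine ⟨k + 1, ?_⟩
        rw [Function.iterate_succ_apply', hk, ← (hσ a b).mp h]
      · have hb : b = π a := (hπ a b).mp h
        cases k with
        | zero =>
          obtain ⟨m, hm, hmv⟩ := hper
          refine ⟨m - 1, ?_⟩
          have hthis : σ (σ^[m - 1] v0) = v0 := by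
            have h5 := hmv
            rw [show m = m - 1 + 1 by omega, Function.iterate_succ_apply'] at h5
            exact h5
          have h2 := congrArg π hthis
          rw [hπσ] at h2
          simp only [Function.iterate_zero, id] at hk
          rw [hb, ← hk, ← h2]
        | succ k =>
          refine ⟨k, ?_⟩
          rw [Function.iterate_succ_apply'] at hk
          rw [hb, ← hk, hπσ]
    intro j
    have h := hconn v0 j
    induction h with
    | refl => exact ⟨0, rfl⟩
    | tail _ hrel ih => exact hO _ _ hrel ih
  -- minimal period m
  set m : ℕ := Nat.find hper with hmdef
  have hm : 0 < m ∧ σ^[m] v0 = v0 := Nat.find_spec hper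
  have hmin : ∀ k, k < m → ¬(0 < k ∧ σ^[k] v0 = v0) := fun k hk => Nat.find_min hper hk
  have hmul : ∀ q, σ^[m * q] v0 = v0 := by
    intro q
    induction q with
    | zero => simp
    | succ q ih =>
      rw [Nat.mul_succ, Function.iterate_add_apply, hm.2, ih]
  have hmod : ∀ k, σ^[k] v0 = σ^[k % m] v0 := by
    intro k
    conv_lhs => rw [show k = k % m + m * (k / m) from (Nat.mod_add_div k m).symm]
    rw [Function.iterate_add_apply, hmul]
  have hinj2 : ∀ p q : ℕ, p ≤ q → q - p < m → σ^[p] v0 = σ^[q] v0 → p = q := by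
    intro p q hpq hlt heq
    by_contra hne
    have h1 : σ^[p] (σ^[q - p] v0) = σ^[p] v0 := by
      rw [← Function.iterate_add_apply, show p + (q - p) = q by omega]
      exact heq.symm
    have h2 : σ^[q - p] v0 = v0 := Function.Injective.iterate hσinj p h1
    exact hmin (q - p) hlt ⟨by omega, h2⟩
  have hcongr : ∀ p q : ℕ, σ^[p] v0 = σ^[q] v0 → p % m = q % m := by
    intro p q h
    have h1 : σ^[p % m] v0 = σ^[q % m] v0 := by rw [← hmod, ← hmod]; exact h
    have hp : p % m < m := Nat.mod_lt _ hm.1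
    have hq : q % m < m := Nat.mod_lt _ hm.1
    rcases le_total (p % m) (q % m) with hle | hle
    · exact hinj2 _ _ hle (by omega) h1
    · exact (hinj2 _ _ hle (by omega) h1.symm).symm
  -- the orbit map is a bijection onto the vertex set
  have hinjOn : ∀ a : ℕ, ∀ s ∈ Finset.range m, ∀ t ∈ Finset.range m,
      σ^[a + s] v0 = σ^[a + t] v0 → s = t := by
    intro a s hs t ht heq
    simp only [Finset.mem_range] at hs ht
    rcases le_total s t with hle | hle
    · have := hinj2 (a + s) (a + t) (by omega) (by omega) heq
      omega
    · have := hinj2 (a + t) (a + s) (by omega) (by omega) heq.symm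
      omega
  have hmn : m = n := by
    have h1 : ((Finset.range m).image fun t => σ^[t] v0) = Finset.univ := by
      apply Finset.eq_univ_of_forall
      intro j
      obtain ⟨k, hk⟩ := horb j
      rw [Finset.mem_image]
      exact ⟨k % m, Finset.mem_range.mpr (Nat.mod_lt _ hm.1), by rw [← hmod]; exact hk⟩
    have h2 : ((Finset.range m).image fun t => σ^[t] v0).card = m := by
      rw [Finset.card_image_of_injOn, Finset.card_range]
      intro s hs t ht heq
      have := hinjOn 0 s hs t ht (by simpa using heq)
      exact this
    rw [h1] at h2
    simpa using h2.symm
  have himg : ∀ a : ℕ, ((Finset.range m).image fun t => σ^[a + t] v0) = Finset.univ := by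
    intro a
    apply Finset.eq_univ_of_card
    rw [Finset.card_image_of_injOn fun s hs t ht heq => hinjOn a s hs t ht heq,
      Finset.card_range, hmn]
    simp
  -- the sign data
  set εz : Fin n → ZMod 2 := fun j => if G.neg (π j) j = true then 1 else 0 with hεzdef
  set d : ℕ → ZMod 2 := fun a => ∑ t ∈ Finset.range a, εz (σ^[t + 1] v0) with hddef
  have hsum0 : (∑ j ∈ Finset.univ, εz j) = 0 := by
    have hcount : (Finset.univ.filter fun j : Fin n => G.neg (π j) j = true).card =
        (Finset.univ.filter fun p : Fin n × Fin n => G.neg p.1 p.2 = true).card := by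
      apply Finset.card_bij (fun j _ => ((π j, j) : Fin n × Fin n))
      · intro j hj
        simp only [Finset.mem_filter, Finset.mem_univ, true_and] at hj ⊢
        exact hj
      · intro j₁ h₁ j₂ h₂ heq
        exact congrArg Prod.snd heq
      · intro p hp
        simp only [Finset.mem_filter, Finset.mem_univ, true_and] at hp
        have hp1 : p.1 = π p.2 := (hπ p.2 p.1).mp (Or.inr hp)
        refine ⟨p.2, ?_, ?_⟩
        · simp only [Finset.mem_filter, Finset.mem_univ, true_and]
          rw [← hp1]; exact hp
        · rw [← hp1]
    have hb : (∑ j ∈ Finset.univ, εz j) =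
        ((Finset.univ.filter fun j : Fin n => G.neg (π j) j = true).card : ZMod 2) := by
      simp only [hεzdef]
      rw [Finset.sum_boole]
    rw [hb, hcount]
    have := hpos
    rw [ZMod.natCast_eq_zero_iff]
    omega
  have hshift : ∀ a : ℕ, (∑ t ∈ Finset.range m, εz (σ^[a + t] v0)) = 0 := by
    intro a
    rw [← Finset.sum_image (f := εz) (g := fun t => σ^[a + t] v0)
      (fun s hs t ht heq => hinjOn a s hs t ht heq), himg a]
    exact hsum0
  have hdstep : ∀ a, d (a + 1) = d a + εz (σ^[a + 1] v0) := by
    intro a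
    rw [hddef]
    exact Finset.sum_range_succ _ a
  have hdper : ∀ a, d (a + m) = d a := by
    intro a
    rw [hddef]
    simp only []
    rw [Finset.sum_range_add]
    have h1 : (∑ t ∈ Finset.range m, εz (σ^[a + t + 1] v0)) = 0 := by
      rw [Finset.sum_congr rfl fun t _ => by rw [show a + t + 1 = (a + 1) + t by omega]]
      exact hshift (a + 1)
    rw [h1, add_zero]
  have hdmod : ∀ p q : ℕ, p % m = q % m → d p = d q := by
    have haux : ∀ q a : ℕ, d (a + m * q) = d a := by
      intro q
      induction q with
      | zero => intro a; simp
      | succ q ih =>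
        intro a
        rw [Nat.mul_succ, ← Nat.add_assoc, hdper, ih]
    intro p q h
    have hp : d p = d (p % m) := by
      conv_lhs => rw [show p = p % m + m * (p / m) from (Nat.mod_add_div p m).symm]
      exact haux _ _
    have hq : d q = d (q % m) := by
      conv_lhs => rw [show q = q % m + m * (q / m) from (Nat.mod_add_div q m).symm]
      exact haux _ _
    rw [hp, hq, h]
  -- index of each vertex on the cycle
  choose kf hkf using horb
  -- the two candidate fixed points
  set xv : ZMod 2 → (Fin n → ℤ) := fun b j => toInt (b + d (kf j)) with hxvdef
  have hxmem : ∀ b, F.mem (xv b) := by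
    intro b j
    rw [hBool j]
    rcases toInt01 (b + d (kf j)) with h | h <;> simp [hxvdef, h]
  have hkv0 : d (kf v0) = 0 := by
    have h0 : σ^[kf v0] v0 = σ^[0] v0 := by rw [hkf v0]; rfl
    have hd0 := hdmod _ _ (hcongr _ _ h0)
    rw [hd0]
    simp [hddef]
  have hstep : ∀ i, d (kf i) = εz i + d (kf (π i)) := by
    intro i
    have h1 : σ^[kf (π i) + 1] v0 = i := by
      rw [Function.iterate_succ_apply', hkf (π i), hσπ]
    have h2 := hcongr _ _ (h1.trans (hkf i).symm)
    rw [← hdmod _ _ h2, hdstep, h1, add_comm]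
  have hfix : ∀ b, F.IsFixed (xv b) := by
    intro b
    refine ⟨hxmem b, funext fun i => ?_⟩
    rw [hf (xv b) (hxmem b) i]
    have hflip : (if G.neg (π i) i = true then 1 - xv b (π i) else xv b (π i))
        = toInt ((if G.neg (π i) i = true then 1 else 0) + (b + d (kf (π i)))) := by
      rw [hxvdef]
      exact toInt_flip _ _
    rw [hflip, hxvdef]
    congr 1
    rw [hstep i, hεzdef]
    ring
  have hxbv0 : ∀ b, xv b v0 = toInt b := by
    intro b
    rw [hxvdef]
    simp only []
    rw [hkv0, add_zero]
  have hzmod2 : ∀ w : ZMod 2, w = 0 ∨ w = 1 := by decide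
  refine ⟨xv 0, xv 1, ?_, hfix 0, hfix 1, ?_⟩
  · intro h
    have := congrFun h v0
    rw [hxbv0, hxbv0] at this
    rw [toInt_zero, toInt_one] at this
    exact absurd this (by norm_num)
  · intro z hz
    set b : ZMod 2 := ((z v0 : ℤ) : ZMod 2) with hbdef
    have hzx : ∀ kk : ℕ, z (σ^[kk] v0) = xv b (σ^[kk] v0) := by
      intro kk
      induction kk with
      | zero =>
        simp only [Function.iterate_zero, id]
        rw [hxbv0]
        rcases hmem01 z hz.1 v0 with h | h <;>
          rw [hbdef, h] <;> norm_num [toInt_zero, toInt_one]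
      | succ kk ih =>
        have hπi : π (σ^[kk + 1] v0) = σ^[kk] v0 := by
          rw [Function.iterate_succ_apply', hπσ]
        have h1 : z (σ^[kk + 1] v0) = F.f z (σ^[kk + 1] v0) := (congrFun hz.2 _).symm
        have h2 : xv b (σ^[kk + 1] v0) = F.f (xv b) (σ^[kk + 1] v0) :=
          (congrFun (hfix b).2 _).symm
        rw [h1, h2, hf z hz.1 _, hf (xv b) (hxmem b) _, hπi, ih]
    have hzeq : z = xv b := by
      funext j
      rw [← hkf j]
      exact hzx (kf j)
    rcases hzmod2 b with h | h
    · left; rw [hzeq, h]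
    · right; rw [hzeq, h]
end

section
/- No degree-bounded finite dynamical system on a signed cycle is nilpotent. -/
open scoped Classical

/-- No degree-bounded FDS on a signed cycle is nilpotent. -/
theorem stmt9 (n : ℕ) (G : SDigraph (Fin n)) (hc : SDigraph.IsSignedCycleGraph G)
    (F : FDS (Fin n)) (hG : F.onGraph G) (hdb : F.degreeBounded G) :
    ¬ F.Nilpotent := by
  classical
  rintro hnil
  unfold FDS.Nilpotent at hnil
  obtain ⟨k, -, c, hcc⟩ := hnil
  unfold SDigraph.IsSignedCycleGraph at hc
  obtain ⟨hn0, -, hpar, hout, hin⟩ := hc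
  have hn : 0 < n := by simpa using hn0
  unfold FDS.onGraph at hG
  obtain ⟨hpos, hneg⟩ := hG
  -- out-degree (signed) is 1
  have houtdeg : ∀ i, G.outdeg i = 1 := by
    intro i
    have hd : Disjoint (Finset.univ.filter fun j => G.pos i j = true)
        (Finset.univ.filter fun j => G.neg i j = true) := by
      rw [Finset.disjoint_left]
      intro a ha hb
      simp only [Finset.mem_filter] at ha hb
      exact hpar i a ⟨ha.2, hb.2⟩
    have hu : (Finset.univ.filter fun j => G.arc i j) =
        (Finset.univ.filter fun j => G.pos i j = true) ∪
        (Finset.univ.filter fun j => G.neg i j = true) := by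
      ext j
      rw [Finset.mem_union, Finset.mem_filter, Finset.mem_filter, Finset.mem_filter]
      exact ⟨fun h => h.2.elim (fun h' => Or.inl ⟨h.1, h'⟩) (fun h' => Or.inr ⟨h.1, h'⟩),
        fun h => h.elim (fun h' => ⟨h'.1, Or.inl h'.2⟩) (fun h' => ⟨h'.1, Or.inr h'.2⟩)⟩
    have h1 := hout i
    unfold SDigraph.underOutdeg at h1
    rw [hu, Finset.card_union_of_disjoint hd] at h1
    exact h1
  -- each vertex has a unique in-neighbour
  have hinn : ∀ i, ∃ j, G.arc j i ∧ ∀ l, G.arc l i → l = j := by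
    intro i
    have h1 := hin i
    unfold SDigraph.underIndeg at h1
    obtain ⟨j, hj⟩ := Finset.card_eq_one.mp h1
    refine ⟨j, ?_, ?_⟩
    · have hjmem : j ∈ (Finset.univ.filter fun l => G.arc l i) := by
        rw [hj]; exact Finset.mem_singleton_self j
      simpa using hjmem
    · intro l hl
      have hlmem : l ∈ (Finset.univ.filter fun l => G.arc l i) := by simp [hl]
      rw [hj] at hlmem
      simpa using hlmem
  -- membership is preserved by updates
  have hmemupd : ∀ (x : Fin n → ℤ) (a : Fin n) (b : ℤ), F.mem x → b ∈ F.X a →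
      F.mem (Function.update x a b) := by
    intro x a b hx hb l
    by_cases h : l = a
    · subst h; simpa using hb
    · rw [Function.update_of_ne h]; exact hx l
  -- every component set has exactly two elements
  have hcard2 : ∀ i, (F.X i).card = 2 := by
    intro i
    have hle : (F.X i).card ≤ 2 := by
      have h := (hdb i).2 (by simp [houtdeg i])
      rw [houtdeg i] at h
      exact h
    have hge : 1 < (F.X i).card := by
      obtain ⟨j, hj, -⟩ := hinn i
      rcases hj with hp | hnn
      · obtain ⟨x, hx, h1, h2⟩ := (hpos j i).mp hp
        exact Finset.one_lt_card.mpr ⟨_, F.maps x hx i, _,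
          F.maps _ (hmemupd x j _ hx h1) i, ne_of_lt h2⟩
      · obtain ⟨x, hx, h1, h2⟩ := (hneg j i).mp hnn
        exact Finset.one_lt_card.mpr ⟨_, F.maps x hx i, _,
          F.maps _ (hmemupd x j _ hx h1) i, ne_of_gt h2⟩
    omega
  -- the minimum of each component set
  obtain ⟨lo, hlo_mem, hlo_le⟩ : ∃ lo : Fin n → ℤ, (∀ i, lo i ∈ F.X i) ∧
      (∀ i, ∀ a ∈ F.X i, lo i ≤ a) :=
    ⟨fun i => (F.X i).min' (F.nonempty i), fun i => Finset.min'_mem _ _,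
      fun i a ha => Finset.min'_le _ a ha⟩
  have hhi_mem : ∀ i, lo i + 1 ∈ F.X i := by
    intro i
    obtain ⟨u, v, huv, hXi⟩ := Finset.card_eq_two.mp (hcard2 i)
    have hu : u ∈ F.X i := by rw [hXi]; simp
    have hv : v ∈ F.X i := by rw [hXi]; simp
    have hlu := hlo_le i u hu
    have hlv := hlo_le i v hv
    have hloin : lo i = u ∨ lo i = v := by
      have h := hlo_mem i; rw [hXi] at h; simpa using h
    have hex : lo i + 1 ≤ u ∨ lo i + 1 ≤ v := by
      rcases hloin with h | h <;> omega
    rcases hex with h | h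
    · exact F.interval i (lo i) (hlo_mem i) u hu (lo i + 1) (by omega) h
    · exact F.interval i (lo i) (hlo_mem i) v hv (lo i + 1) (by omega) h
  have hchar : ∀ i, ∀ a ∈ F.X i, a = lo i ∨ a = lo i + 1 := by
    intro i a ha
    have hsub : ({lo i, lo i + 1} : Finset ℤ) ⊆ F.X i := by
      intro b hb
      rcases Finset.mem_insert.mp hb with rfl | hb
      · exact hlo_mem i
      · rw [Finset.mem_singleton] at hb; subst hb; exact hhi_mem i
    have hcardp : ({lo i, lo i + 1} : Finset ℤ).card = 2 := by
      rw [Finset.card_insert_of_notMem (by simp)]; simp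
    have heq : ({lo i, lo i + 1} : Finset ℤ) = F.X i :=
      Finset.eq_of_subset_of_card_le hsub (by rw [hcard2 i, hcardp])
    rw [← heq] at ha
    simpa using ha
  -- the flip map
  obtain ⟨flip, hflip_apply⟩ : ∃ fl : (Fin n → ℤ) → Fin n → ℤ,
      ∀ x i, fl x i = 2 * lo i + 1 - x i :=
    ⟨fun x i => 2 * lo i + 1 - x i, fun _ _ => rfl⟩
  have hflip_mem : ∀ x, F.mem x → F.mem (flip x) := by
    intro x hx i
    rw [hflip_apply]
    rcases hchar i (x i) (hx i) with h | h
    · rw [h, show 2 * lo i + 1 - lo i = lo i + 1 by ring]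
      exact hhi_mem i
    · rw [h, show 2 * lo i + 1 - (lo i + 1) = lo i by ring]
      exact hlo_mem i
  -- key structural lemma: each coordinate of f depends bijectively on one input
  have hkey : ∀ i : Fin n, ∃ (j : Fin n) (u v : ℤ), u ∈ F.X i ∧ v ∈ F.X i ∧ u ≠ v ∧
      ∀ x, F.mem x → F.f x i = if x j = lo j then u else v := by
    intro i
    obtain ⟨j, hj, hjuniq⟩ := hinn i
    have hnoarc : ∀ a, a ≠ j → ¬ G.arc a i := fun a ha harc => ha (hjuniq a harc)
    have hstep : ∀ a, a ≠ j → ∀ x, F.mem x → x a + 1 ∈ F.X a →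
        F.f x i = F.f (Function.update x a (x a + 1)) i := by
      intro a ha x hx h1
      have hnp : ¬ (G.pos a i = true) := fun hp => hnoarc a ha (Or.inl hp)
      have hnn : ¬ (G.neg a i = true) := fun hp => hnoarc a ha (Or.inr hp)
      rw [hpos a i] at hnp
      rw [hneg a i] at hnn
      push_neg at hnp hnn
      have h2 := hnp x hx h1
      have h3 := hnn x hx h1
      omega
    have hset : ∀ a, a ≠ j → ∀ x, F.mem x → ∀ b, b ∈ F.X a →
        F.f x i = F.f (Function.update x a b) i := by
      intro a ha x hx b hb
      rcases hchar a (x a) (hx a) with h | h <;> rcases hchar a b hb with h' | h'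
      · rw [show b = x a by omega, Function.update_eq_self]
      · have hb' : x a + 1 ∈ F.X a := by rw [h, ← h']; exact hb
        have h4 := hstep a ha x hx hb'
        rw [show x a + 1 = b by omega] at h4
        exact h4
      · have hy := hmemupd x a b hx hb
        have hb2 : (Function.update x a b) a + 1 ∈ F.X a := by
          rw [Function.update_self, show b + 1 = x a by omega]; exact hx a
        have h4 := hstep a ha _ hy hb2
        have h5 : Function.update (Function.update x a b) a
            (Function.update x a b a + 1) = x := by
          rw [Function.update_self, Function.update_idem, show b + 1 = x a by omega,
            Function.update_eq_self]
        rw [h5] at h4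
        exact h4.symm
      · rw [show b = x a by omega, Function.update_eq_self]
    have indep : ∀ m : ℕ, ∀ x y, F.mem x → F.mem y → x j = y j →
        (Finset.univ.filter fun a => x a ≠ y a).card ≤ m → F.f x i = F.f y i := by
      intro m
      induction m with
      | zero =>
        intro x y hx hy hj0 hcard
        have hxy : x = y := by
          funext a
          by_contra hne
          have hmem : a ∈ Finset.univ.filter fun a => x a ≠ y a := by simp [hne]
          have := Finset.card_pos.mpr ⟨a, hmem⟩
          omega
        rw [hxy]
      | succ m ih =>
        intro x y hx hy hj0 hcard
        by_cases hxy : x = y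
        · rw [hxy]
        · have hex : ∃ a, x a ≠ y a := by
            by_contra hno
            push_neg at hno
            exact hxy (funext hno)
          obtain ⟨a, hane⟩ := hex
          have haj : a ≠ j := by rintro rfl; exact hane hj0
          have h1 := hset a haj x hx (y a) (hy a)
          rw [h1]
          apply ih _ y (hmemupd x a (y a) hx (hy a)) hy
          · rw [Function.update_of_ne (Ne.symm haj)]; exact hj0
          · have hsub : (Finset.univ.filter fun l => Function.update x a (y a) l ≠ y l) ⊆
                (Finset.univ.filter fun l => x l ≠ y l).erase a := by
              intro l hl
              simp only [Finset.mem_filter, Finset.mem_univ, true_and] at hl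
              have hla : l ≠ a := by
                rintro rfl
                rw [Function.update_self] at hl
                exact hl rfl
              rw [Finset.mem_erase]
              refine ⟨hla, ?_⟩
              simp only [Finset.mem_filter, Finset.mem_univ, true_and]
              rw [Function.update_of_ne hla] at hl
              exact hl
            have hamem : a ∈ (Finset.univ.filter fun l => x l ≠ y l) := by simp [hane]
            have h2 := Finset.card_le_card hsub
            have h3 := Finset.card_erase_of_mem hamem
            omega
    have hbase : ∃ x₀, F.mem x₀ ∧ x₀ j + 1 ∈ F.X j ∧
        F.f x₀ i ≠ F.f (Function.update x₀ j (x₀ j + 1)) i := by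
      rcases hj with hp | hnn
      · obtain ⟨x, hx, h1, h2⟩ := (hpos j i).mp hp
        exact ⟨x, hx, h1, ne_of_lt h2⟩
      · obtain ⟨x, hx, h1, h2⟩ := (hneg j i).mp hnn
        exact ⟨x, hx, h1, ne_of_gt h2⟩
    obtain ⟨x₀, hx₀, h1, hne2⟩ := hbase
    have hx0j : x₀ j = lo j := by
      rcases hchar j (x₀ j) (hx₀ j) with h | h
      · exact h
      · exfalso
        rcases hchar j (x₀ j + 1) h1 with h' | h' <;> omega
    refine ⟨j, F.f x₀ i, F.f (Function.update x₀ j (x₀ j + 1)) i,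
      F.maps x₀ hx₀ i, F.maps _ (hmemupd x₀ j _ hx₀ h1) i, hne2, ?_⟩
    intro x hx
    by_cases hxj : x j = lo j
    · rw [if_pos hxj]
      exact indep ((Finset.univ.filter fun a => x a ≠ x₀ a).card) x x₀ hx hx₀
        (by rw [hxj, hx0j]) le_rfl
    · rw [if_neg hxj]
      have hxj' : x j = lo j + 1 := by
        rcases hchar j (x j) (hx j) with h | h
        · exact absurd h hxj
        · exact h
      refine indep ((Finset.univ.filter fun a =>
          x a ≠ Function.update x₀ j (x₀ j + 1) a).card) x _ hx
        (hmemupd x₀ j _ hx₀ h1) ?_ le_rfl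
      rw [Function.update_self, hxj', hx0j]
  -- f commutes with flip
  have hcomm : ∀ x, F.mem x → F.f (flip x) = flip (F.f x) := by
    intro x hx
    funext i
    obtain ⟨j, u, v, hu, hv, huv, hform⟩ := hkey i
    have huvsum : u + v = 2 * lo i + 1 := by
      rcases hchar i u hu with h | h <;> rcases hchar i v hv with h' | h' <;> omega
    have hfx := hform x hx
    have hffx := hform (flip x) (hflip_mem x hx)
    show F.f (flip x) i = flip (F.f x) i
    rw [hflip_apply (F.f x) i, hffx, hfx, hflip_apply x j]
    have hx2 := hchar j (x j) (hx j)
    split_ifs <;> omega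
  have hmemiter : ∀ m x, F.mem x → F.mem (F.f^[m] x) := by
    intro m
    induction m with
    | zero => intro x hx; simpa using hx
    | succ m ih =>
      intro x hx
      rw [Function.iterate_succ_apply]
      exact ih _ (F.maps x hx)
  have hiter : ∀ m x, F.mem x → F.f^[m] (flip x) = flip (F.f^[m] x) := by
    intro m
    induction m with
    | zero => intro x hx; simp
    | succ m ih =>
      intro x hx
      rw [Function.iterate_succ_apply, Function.iterate_succ_apply, hcomm x hx,
        ih _ (F.maps x hx)]
  have hx₀ : F.mem lo := hlo_mem
  have e1 := hcc lo hx₀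
  have e2 := hcc (flip lo) (hflip_mem lo hx₀)
  have e3 := hiter k lo hx₀
  rw [e1, e2] at e3
  have i0 : Fin n := ⟨0, hn⟩
  have e4 := congrFun e3 i0
  rw [hflip_apply] at e4
  omega
end

section
/- Let G be a signed digraph whose underlying digraph is the directed cycle 1→2→…→n→1 and which has at least one pair of parallel arcs (a positive and a negative arc between the same ordered pair of consecutive vertices). Then there exists a degree-bounded FDS f on G with f^(n+1) constant. -/
open scoped Classical

namespace Stmt12

open Fin.CommRing

variable {n : ℕ}

/-- The maximum of the interval `X i`: 2 if `i` has parallel outgoing arcs, else 1. -/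
noncomputable def M (G : SDigraph (Fin (n + 1))) (i : Fin (n + 1)) : ℤ :=
  if G.pos i (i + 1) = true ∧ G.neg i (i + 1) = true then 2 else 1

lemma one_le_M (G : SDigraph (Fin (n + 1))) (i : Fin (n + 1)) : 1 ≤ M G i := by
  unfold M; split <;> norm_num

/-- The update function of the FDS. -/
noncomputable def fv (G : SDigraph (Fin (n + 1))) (x : Fin (n + 1) → ℤ) (i : Fin (n + 1)) : ℤ :=
  if (x (i - 1) = 1 ∧ G.pos (i - 1) i = true) ∨
     (x (i - 1) = 0 ∧ G.neg (i - 1) i = true ∧ G.pos (i - 1) i = false)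
  then M G i else 0

lemma fv_eq_or (G : SDigraph (Fin (n + 1))) (x : Fin (n + 1) → ℤ) (i : Fin (n + 1)) :
    fv G x i = 0 ∨ fv G x i = M G i := by
  unfold fv; split
  · exact Or.inr rfl
  · exact Or.inl rfl

lemma fv_mem (G : SDigraph (Fin (n + 1))) (x : Fin (n + 1) → ℤ) (i : Fin (n + 1)) :
    fv G x i ∈ Finset.Icc 0 (M G i) := by
  have h1 := one_le_M G i
  rcases fv_eq_or G x i with h | h <;> rw [h] <;> simp [Finset.mem_Icc] <;> omega

lemma fv_congr (G : SDigraph (Fin (n + 1))) {x y : Fin (n + 1) → ℤ} (i : Fin (n + 1))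
    (h : x (i - 1) = y (i - 1)) : fv G x i = fv G y i := by
  unfold fv; rw [h]

lemma sub_add_cancel' (i : Fin (n + 1)) : i - 1 + 1 = i := by ring

/-- If `i₀` has parallel outgoing arcs, the value of `fv` at `i₀` is never 1. -/
lemma fv_ne_one (G : SDigraph (Fin (n + 1))) {i₀ : Fin (n + 1)}
    (h : G.pos i₀ (i₀ + 1) = true ∧ G.neg i₀ (i₀ + 1) = true)
    (x : Fin (n + 1) → ℤ) : fv G x i₀ ≠ 1 := by
  have hM : M G i₀ = 2 := by unfold M; rw [if_pos h]
  rcases fv_eq_or G x i₀ with h' | h' <;> rw [h'] <;> omega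

/-- Key nilpotency lemma: after `t + 2` steps, coordinate `i₀ + 1 + t` is independent
of the initial state. -/
lemma key (G : SDigraph (Fin (n + 1))) {i₀ : Fin (n + 1)}
    (hp : G.pos i₀ (i₀ + 1) = true ∧ G.neg i₀ (i₀ + 1) = true) :
    ∀ t : ℕ, ∀ m : ℕ, t + 2 ≤ m → ∀ x y : Fin (n + 1) → ℤ,
      (fv G)^[m] x (i₀ + 1 + (t : Fin (n + 1))) = (fv G)^[m] y (i₀ + 1 + (t : Fin (n + 1))) := by
  intro t
  induction t with
  | zero =>
    intro m hm x y
    obtain ⟨k, rfl⟩ : ∃ k, m = k + 1 := ⟨m - 1, by omega⟩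
    have hk : 1 ≤ k := by omega
    obtain ⟨k', rfl⟩ : ∃ k', k = k' + 1 := ⟨k - 1, by omega⟩
    have hzero : ∀ z : Fin (n + 1) → ℤ,
        (fv G)^[k' + 1 + 1] z (i₀ + 1 + ((0 : ℕ) : Fin (n + 1))) = 0 := by
      intro z
      rw [Function.iterate_succ_apply']
      set w := (fv G)^[k' + 1] z with hw
      have hne : w i₀ ≠ 1 := by
        rw [hw, Function.iterate_succ_apply']
        exact fv_ne_one G hp _
      have hpred : (i₀ + 1 + ((0 : ℕ) : Fin (n + 1))) - 1 = i₀ := by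
        push_cast; ring
      unfold fv
      rw [if_neg]
      rw [hpred]
      rintro (⟨h1, _⟩ | ⟨_, _, h3⟩)
      · exact hne h1
      · have : i₀ + 1 + ((0 : ℕ) : Fin (n + 1)) = i₀ + 1 := by push_cast; ring
        rw [this] at h3
        rw [hp.1] at h3
        exact absurd h3 (by simp)
    rw [hzero x, hzero y]
  | succ t ih =>
    intro m hm x y
    obtain ⟨k, rfl⟩ : ∃ k, m = k + 1 := ⟨m - 1, by omega⟩
    have hk : t + 2 ≤ k := by omega
    rw [Function.iterate_succ_apply', Function.iterate_succ_apply']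
    apply fv_congr
    have hpred : (i₀ + 1 + ((t + 1 : ℕ) : Fin (n + 1))) - 1 = i₀ + 1 + ((t : ℕ) : Fin (n + 1)) := by
      push_cast; ring
    rw [hpred]
    exact ih k hk x y

end Stmt12

/-- If the underlying digraph of `G` is the directed cycle
`0 → 1 → ⋯ → n → 0` on `n+1` vertices and `G` has at least one pair of parallel arcs,
then there is a degree-bounded FDS `f` on `G` with `f^((n+1)+1)` constant. -/
theorem stmt12 (n : ℕ) (G : SDigraph (Fin (n + 1)))
    (hcyc : ∀ i j : Fin (n + 1), G.arc i j ↔ j = i + 1)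
    (hpar : ∃ i : Fin (n + 1), G.pos i (i + 1) = true ∧ G.neg i (i + 1) = true) :
    ∃ F : FDS (Fin (n + 1)), F.onGraph G ∧ F.degreeBounded G ∧
      ∃ c : Fin (n + 1) → ℤ, ∀ x, F.mem x → F.f^[(n + 1) + 1] x = c := by
  classical
  obtain ⟨i₀, hp⟩ := hpar
  have harc : ∀ i : Fin (n + 1), G.arc i (i + 1) := fun i => (hcyc i (i + 1)).2 rfl
  have harc' : ∀ i : Fin (n + 1), G.arc (i - 1) i := by
    intro i
    have := harc (i - 1)
    rwa [Stmt12.sub_add_cancel'] at this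
  have hj : ∀ j i : Fin (n + 1), G.arc j i → j = i - 1 := by
    intro j i h
    have := (hcyc j i).1 h
    rw [this]; open Fin.CommRing in ring
  have hmemz : ∀ k : Fin (n + 1), (0 : ℤ) ∈ Finset.Icc 0 (Stmt12.M G k) := by
    intro k
    have := Stmt12.one_le_M G k
    simp [Finset.mem_Icc]; omega
  have hmem1 : ∀ k : Fin (n + 1), (1 : ℤ) ∈ Finset.Icc 0 (Stmt12.M G k) := by
    intro k
    have := Stmt12.one_le_M G k
    simp [Finset.mem_Icc]; omega
  refine ⟨⟨fun i => Finset.Icc 0 (Stmt12.M G i), fun i => ⟨0, hmemz i⟩,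
      fun i a ha b hb c hac hcb => ?_, Stmt12.fv G, fun x _ i => Stmt12.fv_mem G x i⟩,
      ⟨?_, ?_⟩, ?_, ?_⟩
  · simp only [Finset.mem_Icc] at *
    omega
  · -- positive arcs
    intro j i
    constructor
    · intro h
      have hji : j = i - 1 := hj j i (Or.inl h)
      subst hji
      refine ⟨fun _ => 0, fun k => hmemz k, ?_, ?_⟩
      · show (0 : ℤ) + 1 ∈ Finset.Icc 0 (Stmt12.M G (i - 1))
        simpa using hmem1 (i - 1)
      · show Stmt12.fv G (fun _ => 0) i < Stmt12.fv G (Function.update (fun _ => 0) (i - 1) (0 + 1)) i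
        have e1 : Stmt12.fv G (fun _ => 0) i = 0 := by
          unfold Stmt12.fv
          rw [if_neg]
          rintro (⟨h1, _⟩ | ⟨_, _, h3⟩)
          · exact one_ne_zero h1.symm
          · rw [h] at h3; exact absurd h3 (by simp)
        have e2 : Stmt12.fv G (Function.update (fun _ => 0) (i - 1) ((0 : ℤ) + 1)) i
            = Stmt12.M G i := by
          unfold Stmt12.fv
          rw [if_pos]
          left
          refine ⟨?_, h⟩
          simp [Function.update_self]
        rw [e1, e2]
        have := Stmt12.one_le_M G i
        omega
    · rintro ⟨x, hx, hx1, hlt⟩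
      by_contra hc
      rw [Bool.not_eq_true] at hc
      by_cases hji : j = i - 1
      · subst hji
        have hx' : ∀ k, x k ∈ Finset.Icc 0 (Stmt12.M G k) := hx
        have hlt' : Stmt12.fv G x i <
            Stmt12.fv G (Function.update x (i - 1) (x (i - 1) + 1)) i := hlt
        have hv0 : 0 ≤ x (i - 1) := by
          have := hx' (i - 1); simp [Finset.mem_Icc] at this; exact this.1
        have e2 : Stmt12.fv G (Function.update x (i - 1) (x (i - 1) + 1)) i = 0 := by
          unfold Stmt12.fv
          rw [if_neg]
          rw [Function.update_self]
          rintro (⟨_, h2⟩ | ⟨h1, _, _⟩)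
          · rw [hc] at h2; exact absurd h2 (by simp)
          · omega
        rw [e2] at hlt'
        have h0 : 0 ≤ Stmt12.fv G x i := by
          rcases Stmt12.fv_eq_or G x i with h' | h' <;> rw [h'] <;>
            have := Stmt12.one_le_M G i <;> omega
        omega
      · have hlt' : Stmt12.fv G x i <
            Stmt12.fv G (Function.update x j (x j + 1)) i := hlt
        have : Stmt12.fv G (Function.update x j (x j + 1)) i = Stmt12.fv G x i := by
          apply Stmt12.fv_congr
          exact Function.update_of_ne (fun hh => hji hh.symm) _ _
        omega
  · -- negative arcs
    intro j i
    constructor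
    · intro h
      have hji : j = i - 1 := hj j i (Or.inr h)
      subst hji
      by_cases hpos : G.pos (i - 1) i = true
      · -- parallel arcs out of i - 1
        have hM : Stmt12.M G (i - 1) = 2 := by
          unfold Stmt12.M
          rw [if_pos]
          rw [Stmt12.sub_add_cancel']
          exact ⟨hpos, h⟩
        refine ⟨fun k => if k = i - 1 then 1 else 0, fun k => ?_, ?_, ?_⟩
        · by_cases hk : k = i - 1
          · simp only [hk, if_pos rfl]; exact hmem1 _
          · simp only [if_neg hk]; exact hmemz _
        · show (if i - 1 = i - 1 then (1 : ℤ) else 0) + 1 ∈ Finset.Icc 0 (Stmt12.M G (i - 1))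
          rw [if_pos rfl, hM]
          simp [Finset.mem_Icc]
        · show Stmt12.fv G (Function.update (fun k => if k = i - 1 then (1 : ℤ) else 0)
              (i - 1) ((if i - 1 = i - 1 then (1 : ℤ) else 0) + 1)) i
            < Stmt12.fv G (fun k => if k = i - 1 then (1 : ℤ) else 0) i
          have e1 : Stmt12.fv G (fun k => if k = i - 1 then (1 : ℤ) else 0) i
              = Stmt12.M G i := by
            unfold Stmt12.fv
            rw [if_pos]
            left
            exact ⟨by simp, hpos⟩
          have e2 : Stmt12.fv G (Function.update (fun k => if k = i - 1 then (1 : ℤ) else 0)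
              (i - 1) ((if i - 1 = i - 1 then (1 : ℤ) else 0) + 1)) i = 0 := by
            unfold Stmt12.fv
            rw [if_neg]
            rw [Function.update_self, if_pos rfl]
            rintro (⟨h1, _⟩ | ⟨h1, _, _⟩) <;> omega
          rw [e1, e2]
          have := Stmt12.one_le_M G i
          omega
      · -- only a negative arc
        rw [Bool.not_eq_true] at hpos
        refine ⟨fun _ => 0, fun k => hmemz k, ?_, ?_⟩
        · show (0 : ℤ) + 1 ∈ Finset.Icc 0 (Stmt12.M G (i - 1))
          simpa using hmem1 (i - 1)
        · show Stmt12.fv G (Function.update (fun _ => 0) (i - 1) (0 + 1)) i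
            < Stmt12.fv G (fun _ => 0) i
          have e1 : Stmt12.fv G (fun _ => 0) i = Stmt12.M G i := by
            unfold Stmt12.fv
            rw [if_pos]
            right
            exact ⟨rfl, h, hpos⟩
          have e2 : Stmt12.fv G (Function.update (fun _ => 0) (i - 1) ((0 : ℤ) + 1)) i = 0 := by
            unfold Stmt12.fv
            rw [if_neg]
            rw [Function.update_self]
            rintro (⟨_, h2⟩ | ⟨h1, _, _⟩)
            · rw [hpos] at h2; exact absurd h2 (by simp)
            · omega
          rw [e1, e2]
          have := Stmt12.one_le_M G i
          omega
    · rintro ⟨x, hx, hx1, hlt⟩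
      by_contra hc
      rw [Bool.not_eq_true] at hc
      by_cases hji : j = i - 1
      · subst hji
        have hpos : G.pos (i - 1) i = true := by
          rcases harc' i with h' | h'
          · exact h'
          · rw [hc] at h'; exact absurd h' (by simp)
        have hM : Stmt12.M G (i - 1) = 1 := by
          unfold Stmt12.M
          rw [if_neg]
          rintro ⟨_, hn⟩
          rw [Stmt12.sub_add_cancel'] at hn
          rw [hc] at hn; exact absurd hn (by simp)
        have hx' : ∀ k, x k ∈ Finset.Icc 0 (Stmt12.M G k) := hx
        have hx1' : x (i - 1) + 1 ∈ Finset.Icc 0 (Stmt12.M G (i - 1)) := hx1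
        have hlt' : Stmt12.fv G (Function.update x (i - 1) (x (i - 1) + 1)) i <
            Stmt12.fv G x i := hlt
        have hv0 : x (i - 1) = 0 := by
          have h1 := hx' (i - 1)
          rw [hM] at hx1'
          simp [Finset.mem_Icc] at h1 hx1'
          omega
        have e1 : Stmt12.fv G x i = 0 := by
          unfold Stmt12.fv
          rw [if_neg]
          rintro (⟨h1, _⟩ | ⟨_, h2, _⟩)
          · omega
          · rw [hc] at h2; exact absurd h2 (by simp)
        rw [e1] at hlt'
        have h0 : 0 ≤ Stmt12.fv G (Function.update x (i - 1) (x (i - 1) + 1)) i := by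
          rcases Stmt12.fv_eq_or G (Function.update x (i - 1) (x (i - 1) + 1)) i with h' | h' <;>
            rw [h'] <;> have := Stmt12.one_le_M G i <;> omega
        omega
      · have hlt' : Stmt12.fv G (Function.update x j (x j + 1)) i <
            Stmt12.fv G x i := hlt
        have : Stmt12.fv G (Function.update x j (x j + 1)) i = Stmt12.fv G x i := by
          apply Stmt12.fv_congr
          exact Function.update_of_ne (fun hh => hji hh.symm) _ _
        omega
  · -- degree bounded
    have hfilter : ∀ p : Fin (n + 1) → Fin (n + 1) → Bool, (∀ a b, p a b = true → G.arc a b) →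
        ∀ i : Fin (n + 1), (Finset.univ.filter fun j => p i j = true).card
          = if p i (i + 1) = true then 1 else 0 := by
      intro p hpa i
      split_ifs with h'
      · rw [Finset.card_eq_one]
        refine ⟨i + 1, ?_⟩
        ext j
        simp only [Finset.mem_filter, Finset.mem_univ, true_and, Finset.mem_singleton]
        constructor
        · intro hjj; exact (hcyc i j).1 (hpa _ _ hjj)
        · intro hjj; subst hjj; exact h'
      · rw [Finset.card_eq_zero]
        ext j
        simp only [Finset.mem_filter, Finset.mem_univ, true_and, Finset.notMem_empty,
          iff_false]
        intro hjj
        have hji := (hcyc i j).1 (hpa _ _ hjj)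
        rw [hji] at hjj
        exact h' hjj
    have hdeg : ∀ i : Fin (n + 1), G.outdeg i =
        (if G.pos i (i + 1) = true then 1 else 0) + (if G.neg i (i + 1) = true then 1 else 0) := by
      intro i
      unfold SDigraph.outdeg
      rw [hfilter G.pos (fun a b hh => Or.inl hh) i, hfilter G.neg (fun a b hh => Or.inr hh) i]
    intro i
    have hout1 : 1 ≤ G.outdeg i := by
      rw [hdeg i]
      by_cases h1 : G.pos i (i + 1) = true
      · rw [if_pos h1]; omega
      · rcases harc i with h' | h'
        · exact absurd h' h1
        · rw [if_pos h']; omega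
    constructor
    · rintro ⟨h0, _⟩
      omega
    · intro _
      show (Finset.Icc 0 (Stmt12.M G i)).card ≤ G.outdeg i + 1
      rw [Int.card_Icc, hdeg i]
      unfold Stmt12.M
      by_cases hb : G.pos i (i + 1) = true ∧ G.neg i (i + 1) = true
      · rw [if_pos hb, hb.1, hb.2]
        norm_num
      · rw [if_neg hb]
        have h1 : 1 ≤ (if G.pos i (i + 1) = true then 1 else 0)
            + (if G.neg i (i + 1) = true then 1 else 0) := by
          by_cases h1 : G.pos i (i + 1) = true
          · rw [if_pos h1]; omega
          · rcases harc i with h' | h'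
            · exact absurd h' h1
            · rw [if_pos h']; omega
        omega
  · -- nilpotency
    refine ⟨(Stmt12.fv G)^[(n + 1) + 1] (fun _ => 0), fun x _ => ?_⟩
    show (Stmt12.fv G)^[(n + 1) + 1] x = _
    funext j
    open Fin.CommRing in
    have ht : (((j - (i₀ + 1)).val : ℕ) : Fin (n + 1)) = j - (i₀ + 1) :=
      Fin.cast_val_eq_self _
    have hkey := Stmt12.key G hp (j - (i₀ + 1)).val ((n + 1) + 1)
      (by have := (j - (i₀ + 1)).isLt; omega) x (fun _ => 0)
    rw [ht] at hkey
    have hv : i₀ + 1 + (j - (i₀ + 1)) = j := by open Fin.CommRing in ring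
    rw [hv] at hkey
    exact hkey
end

section
/- Suppose G is a connected signed digraph, H is obtained from G by removing the single arc from i to j, where in G vertex i has in-degree 1, out-degree 1, and vertex j has in-degree 1. Then for any degree-bounded system h:Y→Y on H, there is no degree-bounded system f:X→X on G that converges toward h. -/
open scoped Classical

namespace Stmt14Aux
open FDS Function

lemma mem_update {n : ℕ} (F : FDS (Fin n)) {x : Fin n → ℤ} (hx : F.mem x)
    {a : Fin n} {v : ℤ} (hv : v ∈ F.X a) : F.mem (Function.update x a v) := by
  intro b
  rcases eq_or_ne b a with rfl | hb
  · simpa using hv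
  · simpa [Function.update_of_ne hb] using hx b

lemma step_eq {n : ℕ} (F : FDS (Fin n)) (G : SDigraph (Fin n)) (hFG : F.onGraph G)
    {a c : Fin n} (hp : ¬ G.pos a c = true) (hn : ¬ G.neg a c = true)
    {x : Fin n → ℤ} (hx : F.mem x) (h1 : x a + 1 ∈ F.X a) :
    F.f x c = F.f (Function.update x a (x a + 1)) c := by
  by_contra hne
  rcases lt_or_gt_of_ne hne with hlt | hgt
  · exact hp ((hFG.1 a c).2 ⟨x, hx, h1, hlt⟩)
  · exact hn ((hFG.2 a c).2 ⟨x, hx, h1, hgt⟩)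

lemma steps_eq {n : ℕ} (F : FDS (Fin n)) (G : SDigraph (Fin n)) (hFG : F.onGraph G)
    {a c : Fin n} (hp : ¬ G.pos a c = true) (hn : ¬ G.neg a c = true) :
    ∀ d : ℕ, ∀ x : Fin n → ℤ, F.mem x → x a + (d : ℤ) ∈ F.X a →
      F.f x c = F.f (Function.update x a (x a + (d : ℤ))) c := by
  intro d
  induction d with
  | zero => intro x hx _; simp
  | succ d ih =>
    intro x hx hd
    have h1 : x a + 1 ∈ F.X a := by
      refine F.interval a (x a) (hx a) (x a + ((d : ℤ) + 1)) (by push_cast at hd ⊢; exact hd) _ (by linarith) (by linarith [Int.natCast_nonneg d])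
    have e1 := step_eq F G hFG hp hn hx h1
    have hx' : F.mem (update x a (x a + 1)) := mem_update F hx h1
    have e2 := ih (update x a (x a + 1)) hx' (by
      rw [Function.update_self]
      have : x a + 1 + (d : ℤ) = x a + ((d : ℤ) + 1) := by ring
      rw [this]; push_cast at hd ⊢; exact hd)
    rw [e1, e2, Function.update_idem, Function.update_self]
    push_cast
    ring_nf

lemma coord_const {n : ℕ} (F : FDS (Fin n)) (G : SDigraph (Fin n)) (hFG : F.onGraph G)
    {a c : Fin n} (hp : ¬ G.pos a c = true) (hn : ¬ G.neg a c = true)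
    {x : Fin n → ℤ} (hx : F.mem x) {v : ℤ} (hv : v ∈ F.X a) :
    F.f x c = F.f (Function.update x a v) c := by
  rcases le_total (x a) v with hle | hle
  · have := steps_eq F G hFG hp hn (v - x a).toNat x hx (by
      rw [Int.toNat_of_nonneg (by linarith)]; simpa using hv)
    rwa [Int.toNat_of_nonneg (by linarith), show x a + (v - x a) = v by ring] at this
  · set z := Function.update x a v with hz
    have hzmem : F.mem z := mem_update F hx hv
    have hza : z a = v := Function.update_self a v x
    have := steps_eq F G hFG hp hn (x a - v).toNat z hzmem (by
      rw [hza, Int.toNat_of_nonneg (by linarith), show v + (x a - v) = x a by ring]; exact hx a)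
    rw [hza, Int.toNat_of_nonneg (by linarith), show v + (x a - v) = x a by ring] at this
    rw [hz, Function.update_idem, Function.update_eq_self] at this
    exact this.symm

lemma multi_const {n : ℕ} (F : FDS (Fin n)) (G : SDigraph (Fin n)) (hFG : F.onGraph G)
    (c : Fin n) (s : Finset (Fin n)) :
    (∀ a ∈ s, ¬ G.pos a c = true ∧ ¬ G.neg a c = true) →
    ∀ x x' : Fin n → ℤ, F.mem x → F.mem x' → (∀ a, a ∉ s → x a = x' a) →
      F.f x c = F.f x' c := by
  induction s using Finset.induction_on with
  | empty =>
    intro _ x x' _ _ hag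
    have : x = x' := funext fun a => hag a (by simp)
    rw [this]
  | @insert a t ha ih =>
    intro hs x x' hx hx' hag
    have harcs := hs a (Finset.mem_insert_self a t)
    have e1 := coord_const F G hFG harcs.1 harcs.2 hx (v := x' a) (hx' a)
    have hx'' : F.mem (update x a (x' a)) := mem_update F hx (hx' a)
    refine e1.trans (ih (fun b hb => hs b (Finset.mem_insert_of_mem hb)) _ x' hx'' hx' ?_)
    intro b hb
    rcases eq_or_ne b a with rfl | hne
    · simp
    · rw [Function.update_of_ne hne]
      exact hag b (by simp [hne, hb])


theorem stmt14_main (n : ℕ) (G H : SDigraph (Fin n))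
    (i j : Fin n) (hij : i ≠ j) (harc : G.pos i j = true ∨ G.neg i j = true)
    (hout_i : (Finset.univ.filter fun b => G.pos i b = true).card +
      (Finset.univ.filter fun b => G.neg i b = true).card = 1)
    (hin_j : (Finset.univ.filter fun b => G.pos b j = true).card +
      (Finset.univ.filter fun b => G.neg b j = true).card = 1)
    (hHpos : ∀ a b, H.pos a b = true ↔ (G.pos a b = true ∧ ¬(a = i ∧ b = j)))
    (hHneg : ∀ a b, H.neg a b = true ↔ (G.neg a b = true ∧ ¬(a = i ∧ b = j)))
    (h f : FDS (Fin n)) (hhG : h.onGraph H) (hfG : f.onGraph G)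
    (hcardY : (h.X i).card = 2) (hcardX : (f.X i).card ≤ 2)
    (hsub : ∀ a, h.X a ⊆ f.X a) (hagree : ∀ x, h.mem x → f.f x = h.f x) : False := by
  classical
  -- the only in-arc of j in G comes from i
  have hinj : ∀ a : Fin n, (G.pos a j = true ∨ G.neg a j = true) → a = i := by
    intro a haj
    by_contra hne
    have hsub2 : ({i, a} : Finset (Fin n)) ⊆
        (Finset.univ.filter fun b => G.pos b j = true) ∪
        (Finset.univ.filter fun b => G.neg b j = true) := by
      intro b hb
      simp only [Finset.mem_insert, Finset.mem_singleton] at hb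
      rcases hb with rfl | rfl
      · rcases harc with hp | hp <;> simp [Finset.mem_union, hp]
      · rcases haj with hp | hp <;> simp [Finset.mem_union, hp]
    have h2 : 2 ≤ ((Finset.univ.filter fun b => G.pos b j = true) ∪
        (Finset.univ.filter fun b => G.neg b j = true)).card := by
      calc 2 = ({i, a} : Finset (Fin n)).card := by
              rw [Finset.card_insert_of_notMem (by simpa using Ne.symm hne),
                Finset.card_singleton]
        _ ≤ _ := Finset.card_le_card hsub2
    have h3 := Finset.card_union_le (Finset.univ.filter fun b => G.pos b j = true)
      (Finset.univ.filter fun b => G.neg b j = true)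
    omega
  -- Y i = X i
  have hYX : h.X i = f.X i :=
    Finset.eq_of_subset_of_card_le (hsub i) (by omega)
  -- no arc i → j in H
  have hnHp : ¬ H.pos i j = true := fun hh => ((hHpos i j).1 hh).2 ⟨rfl, rfl⟩
  have hnHn : ¬ H.neg i j = true := fun hh => ((hHneg i j).1 hh).2 ⟨rfl, rfl⟩
  -- witness from the arc i → j in G
  obtain ⟨x, hx, hx1, hne⟩ : ∃ x, f.mem x ∧ x i + 1 ∈ f.X i ∧
      f.f x j ≠ f.f (Function.update x i (x i + 1)) j := by
    rcases harc with hp | hp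
    · obtain ⟨x, hx, hx1, hlt⟩ := (hfG.1 i j).1 hp
      exact ⟨x, hx, hx1, ne_of_lt hlt⟩
    · obtain ⟨x, hx, hx1, hlt⟩ := (hfG.2 i j).1 hp
      exact ⟨x, hx, hx1, (ne_of_lt hlt).symm⟩
  have hy0 : h.mem (fun a => (h.nonempty a).choose) := fun a => (h.nonempty a).choose_spec
  set y0 : Fin n → ℤ := fun a => (h.nonempty a).choose with hy0def
  have hxiY : x i ∈ h.X i := by rw [hYX]; exact hx i
  have hxi1Y : x i + 1 ∈ h.X i := by rw [hYX]; exact hx1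
  set y1 := Function.update y0 i (x i) with hy1def
  set y2 := Function.update y0 i (x i + 1) with hy2def
  have hy1 : h.mem y1 := mem_update h hy0 hxiY
  have hy2 : h.mem y2 := mem_update h hy0 hxi1Y
  have hfy1 : f.mem y1 := fun a => hsub a (hy1 a)
  have hfy2 : f.mem y2 := fun a => hsub a (hy2 a)
  set s : Finset (Fin n) := Finset.univ.erase i with hsdef
  have hs : ∀ a ∈ s, ¬ G.pos a j = true ∧ ¬ G.neg a j = true := by
    intro a ha
    have hai : a ≠ i := (Finset.mem_erase.1 ha).1
    exact ⟨fun hp => hai (hinj a (Or.inl hp)), fun hp => hai (hinj a (Or.inr hp))⟩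
  have hout : ∀ a : Fin n, a ∉ s → a = i := by
    intro a ha
    by_contra hne'
    exact ha (Finset.mem_erase.2 ⟨hne', Finset.mem_univ a⟩)
  have eK : f.f x j = f.f y1 j := by
    refine multi_const f G hfG j s hs x y1 hx hfy1 ?_
    intro a ha
    rw [hout a ha, hy1def, Function.update_self]
  have eL : f.f (Function.update x i (x i + 1)) j = f.f y2 j := by
    refine multi_const f G hfG j s hs _ y2 (mem_update f hx hx1) hfy2 ?_
    intro a ha
    rw [hout a ha, hy2def, Function.update_self, Function.update_self]
  have eN : h.f y1 j = h.f y2 j := by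
    have e := step_eq h H hhG hnHp hnHn hy1 (by rw [hy1def, Function.update_self]; exact hxi1Y)
    rwa [show Function.update y1 i (y1 i + 1) = y2 by
      rw [hy1def, hy2def, Function.update_self, Function.update_idem]] at e
  exact hne (by
    rw [eK, eL, congrFun (hagree y1 hy1) j, congrFun (hagree y2 hy2) j, eN])

end Stmt14Aux


/-- Let `G` be connected, and let `H` be obtained from `G` by removing
the single arc from `i` to `j`, where in `G` the vertex `i` has in-degree 1 and
out-degree 1 and `j` has in-degree 1.  Then no degree-bounded system on `G` converges
toward a given degree-bounded system on `H`. -/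
theorem stmt14 (n : ℕ) (G H : SDigraph (Fin n)) (hconn : SDigraph.Connected G)
    (i j : Fin n) (hij : i ≠ j) (harc : G.arc i j)
    (hin_i : SDigraph.indeg G i = 1) (hout_i : SDigraph.outdeg G i = 1)
    (hin_j : SDigraph.indeg G j = 1)
    (hHpos : ∀ a b, H.pos a b = true ↔ (G.pos a b = true ∧ ¬(a = i ∧ b = j)))
    (hHneg : ∀ a b, H.neg a b = true ↔ (G.neg a b = true ∧ ¬(a = i ∧ b = j)))
    (h : FDS (Fin n)) (hhG : h.onGraph H) (hhdb : h.degreeBounded H) :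
    ¬ ∃ (f : FDS (Fin n)) (k : ℕ),
        f.onGraph G ∧ f.degreeBounded G ∧ f.ConvergesToward h k := by
  rintro ⟨f, k, hfG, hfdb, hconv⟩
  classical
  simp only [SDigraph.outdeg, SDigraph.indeg] at hout_i hin_j hin_i
  -- the only out-arc of i in G goes to j
  have houtj : ∀ b : Fin n, (G.pos i b = true ∨ G.neg i b = true) → b = j := by
    intro b hb
    by_contra hne
    have hsub2 : ({j, b} : Finset (Fin n)) ⊆
        (Finset.univ.filter fun c => G.pos i c = true) ∪
        (Finset.univ.filter fun c => G.neg i c = true) := by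
      intro c hc
      simp only [Finset.mem_insert, Finset.mem_singleton] at hc
      rcases hc with rfl | rfl
      · rcases harc with hp | hp <;> simp [Finset.mem_union, hp]
      · rcases hb with hp | hp <;> simp [Finset.mem_union, hp]
    have h2 : 2 ≤ ((Finset.univ.filter fun c => G.pos i c = true) ∪
        (Finset.univ.filter fun c => G.neg i c = true)).card := by
      calc 2 = ({j, b} : Finset (Fin n)).card := by
              rw [Finset.card_insert_of_notMem (by simpa using Ne.symm hne),
                Finset.card_singleton]
        _ ≤ _ := Finset.card_le_card hsub2
    have h3 := Finset.card_union_le (Finset.univ.filter fun c => G.pos i c = true)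
      (Finset.univ.filter fun c => G.neg i c = true)
    omega
  -- i has no out-arcs in H
  have hHnone : ∀ b : Fin n, ¬ H.pos i b = true ∧ ¬ H.neg i b = true := by
    intro b
    constructor
    · intro hh
      obtain ⟨hg, hnot⟩ := (hHpos i b).1 hh
      exact hnot ⟨rfl, houtj b (Or.inl hg)⟩
    · intro hh
      obtain ⟨hg, hnot⟩ := (hHneg i b).1 hh
      exact hnot ⟨rfl, houtj b (Or.inr hg)⟩
  have hHout : SDigraph.outdeg H i = 0 := by
    simp only [SDigraph.outdeg]
    rw [Finset.filter_false_of_mem (fun b _ => (hHnone b).1),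
      Finset.filter_false_of_mem (fun b _ => (hHnone b).2)]
    simp
  have hHin : SDigraph.indeg H i = 1 := by
    simp only [SDigraph.indeg]
    have e1 : (Finset.univ.filter fun a => H.pos a i = true)
        = (Finset.univ.filter fun a => G.pos a i = true) :=
      Finset.filter_congr (fun a _ => by rw [hHpos]; simp [hij])
    have e2 : (Finset.univ.filter fun a => H.neg a i = true)
        = (Finset.univ.filter fun a => G.neg a i = true) :=
      Finset.filter_congr (fun a _ => by rw [hHneg]; simp [hij])
    rw [e1, e2]; exact hin_i
  have hcardY : (h.X i).card = 2 := (hhdb i).1 ⟨hHout, by rw [hHin]; norm_num⟩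
  have hcardX : (f.X i).card ≤ 2 := by
    have hne : ¬ (SDigraph.outdeg G i = 0 ∧ 0 < SDigraph.indeg G i) := by
      intro hc
      have := hc.1
      simp only [SDigraph.outdeg] at this
      omega
    have := (hfdb i).2 hne
    simp only [SDigraph.outdeg] at this
    omega
  exact Stmt14Aux.stmt14_main n G H i j hij harc hout_i hin_j hHpos hHneg h f hhG hfG
    hcardY hcardX hconv.1 hconv.2.2
end
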